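/- Let λ' be the Perron eigenvalue of the irreducible nonnegative integer matrix B = [[13, 5], [3, 1]], so λ' = 7 + √51 and K = ℚ(√51). Let w be an eigenvector of B for λ' with coordinates in ℤ[λ'], and let I_B be the O_K-ideal generated by the coordinates of w. Then the class [I_B] in Cl(O_K) does NOT lie in the subgroup of Cl(O_K) generated by the classes of the prime ideals of O_K dividing λ'. Consequently, combined with the invariance of this class under strong shift equivalence, the matrices [[14,2],[1,0]] and [[13,5],[3,1]] are not strong shift equivalent. -/

import Mathlib

/-- An elementary strong shift equivalence step between square nonnegative integer
matrices: `A = R·S` and `B = S·R` for rectangular nonnegative integer matrices `R`, `S`. -/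
def ElemSSE (X Y : Σ n : ℕ, Matrix (Fin n) (Fin n) ℕ) : Prop :=
  ∃ (R : Matrix (Fin X.1) (Fin Y.1) ℕ) (S : Matrix (Fin Y.1) (Fin X.1) ℕ),
    X.2 = R * S ∧ Y.2 = S * R

/-- Strong shift equivalence: a finite chain of elementary strong shift equivalences. -/
def SSE (X Y : Σ n : ℕ, Matrix (Fin n) (Fin n) ℕ) : Prop :=
  Relation.ReflTransGen ElemSSE X Y

open NumberField

set_option linter.unusedSectionVars false

section Aux

variable {K : Type} [Field K] [NumberField K]

lemma rat_sq_ne_51 (q : ℚ) : q ^ 2 ≠ 51 := by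
  intro h
  have hint : IsIntegral ℤ q := ⟨Polynomial.X ^ 2 - Polynomial.C 51, by
    apply Polynomial.monic_X_pow_sub_C _ (by norm_num), by
    simp [Polynomial.eval₂_sub, Polynomial.eval₂_pow, h]⟩
  obtain ⟨m, hmq⟩ := IsIntegrallyClosed.isIntegral_iff.mp hint
  rw [eq_intCast] at hmq
  have hm : m ^ 2 = 51 := by
    have : ((m : ℚ)) ^ 2 = 51 := by rw [hmq]; exact h
    exact_mod_cast this
  have h1 : m ≤ 7 := by nlinarith
  have h2 : -7 ≤ m := by nlinarith
  interval_cases m <;> omega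

lemma s_not_rat (s : K) (hs : s ^ 2 = 51) (q : ℚ) : algebraMap ℚ K q ≠ s := by
  intro h
  apply rat_sq_ne_51 q
  have : algebraMap ℚ K (q ^ 2) = algebraMap ℚ K 51 := by
    rw [map_pow, h, hs]; simp
  exact (algebraMap ℚ K).injective this

lemma exists_basis (s : K) (hs : s ^ 2 = 51) (hgen : Algebra.adjoin ℚ ({s} : Set K) = ⊤) :
    ∃ b : Module.Basis (Fin 2) ℚ K, b 0 = 1 ∧ b 1 = s := by
  have hli : LinearIndependent ℚ ![(1 : K), s] := by
    rw [linearIndependent_fin2]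
    refine ⟨?_, ?_⟩
    · simp only [Matrix.cons_val_one, Matrix.head_cons, Matrix.cons_val_zero]
      intro h0
      rw [h0] at hs; norm_num at hs
    · intro a ha
      simp only [Matrix.cons_val_one, Matrix.head_cons, Matrix.cons_val_zero] at ha
      rw [Algebra.smul_def] at ha
      apply s_not_rat s hs a⁻¹
      rw [map_inv₀, (eq_inv_of_mul_eq_one_right ha)]
  have hsp : ⊤ ≤ Submodule.span ℚ (Set.range ![(1:K), s]) := by
    have hr : Set.range ![(1:K), s] = {1, s} := by
      ext x; simp [Matrix.range_cons, Matrix.range_empty]; tauto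
    rw [hr]
    have hpow : ∀ n : ℕ, s ^ n ∈ Submodule.span ℚ ({1, s} : Set K) := by
      intro n
      induction n using Nat.strong_induction_on with
      | _ n ih =>
        match n with
        | 0 => exact Submodule.subset_span (by simp)
        | 1 => exact Submodule.subset_span (by simp)
        | (k+2) =>
          have h2 : s ^ (k + 2) = (51 : ℚ) • s ^ k := by
            rw [pow_add, hs, Algebra.smul_def, map_ofNat]; ring
          rw [h2]
          exact Submodule.smul_mem _ _ (ih k (by omega))
    intro x _
    have : x ∈ Subalgebra.toSubmodule (Algebra.adjoin ℚ ({s} : Set K)) := by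
      rw [hgen]; trivial
    rw [Algebra.adjoin_eq_span] at this
    refine Submodule.span_le.mpr ?_ this
    rintro y hy
    obtain ⟨n, rfl⟩ := Submonoid.mem_closure_singleton.mp hy
    exact hpow n
  exact ⟨Module.Basis.mk hli hsp, by simp [Module.Basis.coe_mk], by simp [Module.Basis.coe_mk]⟩

lemma norm_trace_formula (s : K) (hs : s ^ 2 = 51) (b : Module.Basis (Fin 2) ℚ K)
    (hb0 : b 0 = 1) (hb1 : b 1 = s) (p q : ℚ) :
    Algebra.norm ℚ (algebraMap ℚ K p + algebraMap ℚ K q * s) = p ^ 2 - 51 * q ^ 2 ∧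
    Algebra.trace ℚ K (algebraMap ℚ K p + algebraMap ℚ K q * s) = 2 * p := by
  set x : K := algebraMap ℚ K p + algebraMap ℚ K q * s with hx
  have hxs : ∀ c d : ℚ, b.repr (c • b 0 + d • b 1) = Finsupp.single 0 c + Finsupp.single 1 d := by
    intro c d
    rw [map_add, map_smul, map_smul, b.repr_self, b.repr_self]
    ext i
    simp [Finsupp.single_apply]
  have r0 : b.repr (x * b 0) = Finsupp.single 0 p + Finsupp.single 1 q := by
    rw [← hxs]
    congr 1
    rw [hb0, hb1, mul_one, hx, Algebra.smul_def, Algebra.smul_def]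
    ring
  have r1 : b.repr (x * b 1) = Finsupp.single 0 (51 * q) + Finsupp.single 1 p := by
    rw [← hxs]
    congr 1
    rw [hb0, hb1, hx, Algebra.smul_def, Algebra.smul_def, add_mul, mul_assoc, ← pow_two, hs]
    rw [map_mul, map_ofNat, mul_one]
    ring
  have hM : Algebra.leftMulMatrix b x = !![p, 51 * q; q, p] := by
    ext i j
    rw [Algebra.leftMulMatrix_eq_repr_mul]
    fin_cases i <;> fin_cases j <;>
      simp [r0, r1, Finsupp.single_apply]
  constructor
  · rw [Algebra.norm_eq_matrix_det b, hM, Matrix.det_fin_two_of]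
    ring
  · rw [Algebra.trace_eq_matrix_trace b, hM, Matrix.trace_fin_two_of]
    ring

set_option maxRecDepth 10000 in
lemma zmod68 : ∀ a b : ZMod 68, a^2 - 51*b^2 ≠ 20 ∧ a^2 - 51*b^2 ≠ -20 := by decide

lemma int_no_sol (u w n : ℤ) (hn : n = 5 ∨ n = -5) : u ^ 2 - 51 * w ^ 2 ≠ 4 * n := by
  intro h
  have hc := congrArg (Int.cast : ℤ → ZMod 68) h
  push_cast at hc
  rcases hn with rfl | rfl
  · exact (zmod68 (u : ZMod 68) (w : ZMod 68)).1 (by rw [hc]; norm_num)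
  · exact (zmod68 (u : ZMod 68) (w : ZMod 68)).2 (by rw [hc]; norm_num)

lemma no_norm_pm5 (s : K) (hs : s ^ 2 = 51) (b : Module.Basis (Fin 2) ℚ K)
    (hb0 : b 0 = 1) (hb1 : b 1 = s) (x : NumberField.RingOfIntegers K) (n : ℤ)
    (hn : n = 5 ∨ n = -5)
    (hnx : Algebra.norm ℚ (algebraMap (NumberField.RingOfIntegers K) K x) = (n : ℚ)) :
    False := by
  set xK : K := algebraMap (NumberField.RingOfIntegers K) K x with hxK
  have hint : IsIntegral ℤ xK := NumberField.RingOfIntegers.isIntegral_coe x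
  set p : ℚ := b.repr xK 0 with hp
  set q : ℚ := b.repr xK 1 with hq
  have hrepr : xK = algebraMap ℚ K p + algebraMap ℚ K q * s := by
    have := b.sum_repr xK
    rw [Fin.sum_univ_two] at this
    rw [← this, hb0, hb1, Algebra.smul_def, Algebra.smul_def, mul_one]
  obtain ⟨hnorm, htrace⟩ := norm_trace_formula s hs b hb0 hb1 p q
  rw [← hrepr] at hnorm htrace
  rw [hnx] at hnorm
  -- trace is integral
  have htr_int : IsIntegral ℤ (Algebra.trace ℚ K xK) := Algebra.isIntegral_trace hint
  obtain ⟨u, hu⟩ := IsIntegrallyClosed.isIntegral_iff.mp htr_int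
  rw [eq_intCast] at hu
  rw [htrace] at hu
  -- 102 q is integral
  have hq2 : (102 * q) ^ 2 = ((51 * u ^ 2 - 204 * n : ℤ) : ℚ) := by
    push_cast
    have h1 : (u : ℚ) ^ 2 = 4 * p ^ 2 := by rw [hu]; ring
    rw [h1]
    linear_combination (204 : ℚ) * hnorm
  have h102 : IsIntegral ℤ (102 * q) := by
    refine ⟨Polynomial.X ^ 2 - Polynomial.C (51 * u ^ 2 - 204 * n), ?_, ?_⟩
    · exact Polynomial.monic_X_pow_sub_C _ (by norm_num)
    · simp only [Polynomial.eval₂_sub, Polynomial.eval₂_pow, Polynomial.eval₂_X,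
        Polynomial.eval₂_C]
      rw [eq_intCast, hq2]; ring
  obtain ⟨t, ht⟩ := IsIntegrallyClosed.isIntegral_iff.mp h102
  rw [eq_intCast] at ht
  have ht2 : t ^ 2 = 51 * u ^ 2 - 204 * n := by
    have : ((t : ℚ)) ^ 2 = ((51 * u ^ 2 - 204 * n : ℤ) : ℚ) := by rw [ht]; exact hq2
    exact_mod_cast this
  have h3 : (3 : ℤ) ∣ t := by
    refine Int.prime_three.dvd_of_dvd_pow (n := 2) ⟨17 * u ^ 2 - 68 * n, by linarith⟩
  have h17 : (17 : ℤ) ∣ t := by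
    refine (by norm_num : Prime (17 : ℤ)).dvd_of_dvd_pow (n := 2) ⟨3 * u ^ 2 - 12 * n, by linarith⟩
  have h51 : (51 : ℤ) ∣ t := by
    have hcop : IsCoprime (3 : ℤ) 17 := by
      rw [Int.isCoprime_iff_gcd_eq_one]; norm_num
    exact (by norm_num : (51:ℤ) = 3 * 17) ▸ hcop.mul_dvd h3 h17
  obtain ⟨v, rfl⟩ := h51
  have hv : u ^ 2 - 51 * v ^ 2 = 4 * n := by nlinarith [ht2]
  exact int_no_sol u v n hn hv

-- integer norm values
lemma nZ_values (s : K) (hs : s ^ 2 = 51) (b : Module.Basis (Fin 2) ℚ K)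
    (hb0 : b 0 = 1) (hb1 : b 1 = s) (lamO : 𝓞 K)
    (hlamO : algebraMap (𝓞 K) K lamO = 7 + s) :
    Algebra.norm ℤ (5 : 𝓞 K) = 25 ∧ Algebra.norm ℤ (3 : 𝓞 K) = 9 ∧
    Algebra.norm ℤ (lamO - 13) = -15 ∧ Algebra.norm ℤ (lamO - 1) = -15 ∧
    Algebra.norm ℤ lamO = -2 := by
  have key : ∀ (y : 𝓞 K) (p q : ℚ) (m : ℤ),
      algebraMap (𝓞 K) K y = algebraMap ℚ K p + algebraMap ℚ K q * s →
      p ^ 2 - 51 * q ^ 2 = (m : ℚ) → Algebra.norm ℤ y = m := by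
    intro y p q m hy hm
    have h1 : ((Algebra.norm ℤ y : ℤ) : ℚ) = (m : ℚ) := by
      rw [Algebra.coe_norm_int, RingOfIntegers.coe_eq_algebraMap, hy,
        (norm_trace_formula s hs b hb0 hb1 p q).1, hm]
    exact_mod_cast h1
  refine ⟨key 5 5 0 25 (by simp [map_ofNat]) (by norm_num),
    key 3 3 0 9 (by simp [map_ofNat]) (by norm_num),
    key _ (-6) 1 (-15) ?_ (by norm_num),
    key _ 6 1 (-15) ?_ (by norm_num),
    key lamO 7 1 (-2) ?_ (by norm_num)⟩
  · rw [map_sub, hlamO, map_neg, map_ofNat, map_ofNat, map_one]; ring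
  · rw [map_sub, hlamO, map_ofNat, map_one, map_one]; ring
  · rw [hlamO, map_ofNat, map_one]; ring

lemma core_nonprincipal (s : K) (hs : s ^ 2 = 51) (b : Module.Basis (Fin 2) ℚ K)
    (hb0 : b 0 = 1) (hb1 : b 1 = s) (lamO : 𝓞 K)
    (hlamO : algebraMap (𝓞 K) K lamO = 7 + s)
    (w : Fin 2 → 𝓞 K) (hw0 : w ≠ 0)
    (h1 : 13 * w 0 + 5 * w 1 = lamO * w 0)
    (h2 : 3 * w 0 + w 1 = lamO * w 1) :
    ¬ (Ideal.span (Set.range w)).IsPrincipal := by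
  rintro hP
  obtain ⟨α, hα⟩ := hP.principal
  have hαne : α ≠ 0 := by
    rintro rfl
    apply hw0
    funext i
    show w i = 0
    have hmi : w i ∈ Ideal.span (Set.range w) := Ideal.subset_span ⟨i, rfl⟩
    rw [hα] at hmi
    obtain ⟨z, hz⟩ := Submodule.mem_span_singleton.mp hmi
    simpa using hz.symm
  have m0 : w 0 ∈ Ideal.span (Set.range w) := Ideal.subset_span ⟨0, rfl⟩
  have m1 : w 1 ∈ Ideal.span (Set.range w) := Ideal.subset_span ⟨1, rfl⟩
  rw [hα] at m0 m1
  obtain ⟨a, ha⟩ := Ideal.mem_span_singleton'.mp m0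
  obtain ⟨bb, hbb⟩ := Ideal.mem_span_singleton'.mp m1
  have hαmem : α ∈ Ideal.span (Set.range w) := by
    rw [hα]; exact Ideal.mem_span_singleton_self α
  obtain ⟨c, hc⟩ := (Submodule.mem_span_range_iff_exists_fun (𝓞 K)).mp hαmem
  rw [Fin.sum_univ_two, smul_eq_mul, smul_eq_mul] at hc
  have hone : c 0 * a + c 1 * bb = 1 := by
    have h' : (c 0 * a + c 1 * bb) * α = 1 * α := by
      linear_combination c 0 * ha + c 1 * hbb + hc
    exact mul_right_cancel₀ hαne h'
  set μ : 𝓞 K := lamO - 13 with hμ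
  set ν : 𝓞 K := lamO - 1 with hν
  have h5b : 5 * bb = μ * a := by
    refine mul_right_cancel₀ hαne ?_
    rw [hμ]
    linear_combination 5 * hbb - (lamO - 13) * ha + h1
  have h3a : 3 * a = ν * bb := by
    refine mul_right_cancel₀ hαne ?_
    rw [hν]
    linear_combination 3 * ha - (lamO - 1) * hbb + h2
  set e : 𝓞 K := 5 * c 0 + μ * c 1 with he
  set f : 𝓞 K := ν * c 0 + 3 * c 1 with hf
  have hae : a * e = 5 := by
    rw [he]; linear_combination (- c 1) * h5b + 5 * hone
  have hbf : bb * f = 3 := by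
    rw [hf]; linear_combination (- c 0) * h3a + 3 * hone
  have heb : e * bb = μ := by
    rw [he]; linear_combination (c 0) * h5b + μ * hone
  have hfa : f * a = ν := by
    rw [hf]; linear_combination (c 1) * h3a + ν * hone
  -- pass to integer norms
  obtain ⟨n5, n3, nmu, nnu, nlam⟩ := nZ_values s hs b hb0 hb1 lamO hlamO
  set N : 𝓞 K →* ℤ := Algebra.norm ℤ with hN
  have hA : N a * N e = 25 := by rw [← map_mul, hae]; exact n5
  have hB : N bb * N f = 9 := by rw [← map_mul, hbf]; exact n3
  have hE : N e * N bb = -15 := by rw [← map_mul, heb]; exact nmu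
  have hF : N f * N a = -15 := by rw [← map_mul, hfa]; exact nnu
  -- integer arithmetic: N a = ±5
  have hdvd5 : N a ∣ 5 := by
    have d25 : N a ∣ 25 := ⟨N e, hA.symm⟩
    have d15 : N a ∣ 15 := ⟨-N f, by linarith [hF]⟩
    have : N a ∣ 2 * 15 - 25 := dvd_sub (d15.mul_left 2) d25
    simpa using this
  have habs : (N a).natAbs = 1 ∨ (N a).natAbs = 5 :=
    (by norm_num : Nat.Prime 5).eq_one_or_self_of_dvd _
      (by simpa using Int.natAbs_dvd_natAbs.mpr hdvd5)
  have hA5 : N a = 5 ∨ N a = -5 := by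
    rcases habs with h | h
    · exfalso
      have ha1 : N a = 1 ∨ N a = -1 := Int.natAbs_eq_iff.mp h |>.imp id id
      have hEdvd : N e ∣ 15 := ⟨-N bb, by linarith [hE]⟩
      rcases ha1 with h' | h' <;> rw [h'] at hA
      · have h25 : N e = 25 := by omega
        rw [h25] at hEdvd; norm_num at hEdvd
      · have h25 : N e = -25 := by omega
        rw [h25] at hEdvd; norm_num at hEdvd
    · exact (Int.natAbs_eq_iff.mp h).imp (fun h' => by exact_mod_cast h')
        (fun h' => by exact_mod_cast h')
  -- contradiction with no_norm_pm5
  refine no_norm_pm5 s hs b hb0 hb1 a (N a) hA5 ?_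
  rw [← Algebra.coe_norm_int]

lemma lam_ne_zero (s : K) (hs : s ^ 2 = 51) (lamO : 𝓞 K)
    (hlamO : algebraMap (𝓞 K) K lamO = 7 + s) : lamO ≠ 0 := by
  intro h
  rw [h, map_zero] at hlamO
  have : s = -7 := by linear_combination -hlamO
  rw [this] at hs
  norm_num at hs

lemma span_lam_maximal (s : K) (hs : s ^ 2 = 51) (lamO : 𝓞 K)
    (hlamO : algebraMap (𝓞 K) K lamO = 7 + s)
    (hnorm : Algebra.norm ℤ lamO = -2) :
    (Ideal.span {lamO} : Ideal (𝓞 K)).IsMaximal := by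
  have habs : Ideal.absNorm (Ideal.span {lamO} : Ideal (𝓞 K)) = 2 := by
    rw [Ideal.absNorm_span_singleton, hnorm]
    rfl
  have hprime : (Ideal.span {lamO} : Ideal (𝓞 K)).IsPrime :=
    Ideal.isPrime_of_irreducible_absNorm (by rw [habs]; exact Nat.irreducible_iff_nat_prime 2 |>.mpr Nat.prime_two)
  exact hprime.isMaximal (by
    rw [Ne, Ideal.span_singleton_eq_bot]
    exact lam_ne_zero s hs lamO hlamO)

lemma cast_mul_map {m n p : ℕ} (A : Matrix (Fin m) (Fin n) ℕ) (B : Matrix (Fin n) (Fin p) ℕ) :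
    (A * B).map (Nat.cast : ℕ → 𝓞 K) = A.map (Nat.cast : ℕ → 𝓞 K) * B.map (Nat.cast : ℕ → 𝓞 K) := by
  refine Matrix.ext fun i j => ?_
  simp [Matrix.mul_apply, Matrix.map_apply]

def SSEInv (lamO : 𝓞 K) (X : Σ n : ℕ, Matrix (Fin n) (Fin n) ℕ) : Prop :=
  ∃ v : Fin X.1 → 𝓞 K, v ≠ 0 ∧ (X.2.map (Nat.cast : ℕ → 𝓞 K)).mulVec v = lamO • v ∧
    (Ideal.span (Set.range v)).IsPrincipal

lemma inv_step (s : K) (hs : s ^ 2 = 51) (lamO : 𝓞 K)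
    (hlamO : algebraMap (𝓞 K) K lamO = 7 + s)
    (hmax : (Ideal.span {lamO} : Ideal (𝓞 K)).IsMaximal)
    (X Y : Σ n : ℕ, Matrix (Fin n) (Fin n) ℕ) (hXY : ElemSSE X Y)
    (hX : SSEInv lamO X) : SSEInv lamO Y := by
  obtain ⟨R, S, hR, hS⟩ := hXY
  obtain ⟨v, hv0, hveig, hvP⟩ := hX
  have hlam0 : lamO ≠ 0 := by
    intro h
    rw [h, map_zero] at hlamO
    have : s = -7 := by linear_combination -hlamO
    rw [this] at hs; norm_num at hs
  set Rc := R.map (Nat.cast : ℕ → 𝓞 K) with hRc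
  set Sc := S.map (Nat.cast : ℕ → 𝓞 K) with hSc
  set u : Fin Y.1 → 𝓞 K := Sc.mulVec v with hu
  have hXc : X.2.map (Nat.cast : ℕ → 𝓞 K) = Rc * Sc := by rw [hR, cast_mul_map]
  have hYc : Y.2.map (Nat.cast : ℕ → 𝓞 K) = Sc * Rc := by rw [hS, cast_mul_map]
  have hueig : (Y.2.map (Nat.cast : ℕ → 𝓞 K)).mulVec u = lamO • u := by
    rw [hYc, hu, Matrix.mulVec_mulVec, Matrix.mul_assoc, ← Matrix.mulVec_mulVec, ← hXc, hveig,
      Matrix.mulVec_smul]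
  have hRu : Rc.mulVec u = lamO • v := by
    rw [hu, Matrix.mulVec_mulVec, ← hXc, hveig]
  have hu0 : u ≠ 0 := by
    intro h
    apply hv0
    rw [h, Matrix.mulVec_zero] at hRu
    funext i
    have := congrFun hRu i
    simp only [Pi.zero_apply, Pi.smul_apply, smul_eq_mul] at this
    rcases mul_eq_zero.mp this.symm with h' | h'
    · exact absurd h' hlam0
    · exact h'
  obtain ⟨α, hα⟩ := hvP.principal
  have hαne : α ≠ 0 := by
    rintro rfl
    apply hv0
    funext i
    have hmi : v i ∈ Ideal.span (Set.range v) := Ideal.subset_span ⟨i, rfl⟩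
    rw [hα] at hmi
    obtain ⟨z, hz⟩ := Submodule.mem_span_singleton.mp hmi
    simpa using hz.symm
  -- choose t with u i = t i * α
  have humem : ∀ i, ∃ ti, ti * α = u i := by
    intro i
    have : u i ∈ Ideal.span (Set.range v) := by
      rw [hu]
      show (∑ j, Sc i j * v j) ∈ Ideal.span (Set.range v)
      refine Ideal.sum_mem _ fun j _ => ?_
      exact Ideal.mul_mem_left _ _ (Ideal.subset_span ⟨j, rfl⟩)
    rw [hα] at this
    exact Ideal.mem_span_singleton'.mp this
  choose t ht using humem
  -- choose σ with v i = σ i * α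
  have hvmem : ∀ i, ∃ si, si * α = v i := by
    intro i
    have hmi : v i ∈ Ideal.span (Set.range v) := Ideal.subset_span ⟨i, rfl⟩
    rw [hα] at hmi
    exact Ideal.mem_span_singleton'.mp hmi
  choose σ hσ using hvmem
  have hαmem : α ∈ Ideal.span (Set.range v) := by
    rw [hα]; exact Ideal.mem_span_singleton_self α
  obtain ⟨d, hd⟩ := (Submodule.mem_span_range_iff_exists_fun (𝓞 K)).mp hαmem
  have hdσ : (∑ i, d i * σ i) = 1 := by
    have e1 : (∑ i, d i * σ i) * α = ∑ i, d i • v i := by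
      rw [Finset.sum_mul]
      exact Finset.sum_congr rfl fun i _ => by rw [smul_eq_mul, ← hσ i]; ring
    refine mul_right_cancel₀ hαne ?_
    rw [one_mul, e1, hd]
  have hlamsig : ∀ i, lamO * σ i = Rc.mulVec t i := by
    intro i
    refine mul_right_cancel₀ hαne ?_
    have h1 : lamO * v i = Rc.mulVec u i := (congrFun hRu i).symm.trans rfl
    calc lamO * σ i * α = lamO * (σ i * α) := by ring
      _ = lamO * v i := by rw [hσ]
      _ = Rc.mulVec u i := h1
      _ = (∑ j, Rc i j * (t j * α)) := by
          simp only [Matrix.mulVec, dotProduct]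
          exact Finset.sum_congr rfl fun j _ => by rw [ht]
      _ = Rc.mulVec t i * α := by
          simp only [Matrix.mulVec, dotProduct, Finset.sum_mul]
          exact Finset.sum_congr rfl fun j _ => by ring
  set U : Ideal (𝓞 K) := Ideal.span (Set.range t) with hU
  have hlamU : lamO ∈ U := by
    have : lamO = ∑ i, d i * Rc.mulVec t i := by
      calc lamO = lamO * ∑ i, d i * σ i := by rw [hdσ, mul_one]
        _ = ∑ i, d i * (lamO * σ i) := by
              rw [Finset.mul_sum]; exact Finset.sum_congr rfl fun i _ => by ring
        _ = ∑ i, d i * Rc.mulVec t i := Finset.sum_congr rfl fun i _ => by rw [hlamsig]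
    rw [this]
    refine Ideal.sum_mem _ fun i _ => Ideal.mul_mem_left _ _ ?_
    show (∑ j, Rc i j * t j) ∈ U
    refine Ideal.sum_mem _ fun j _ => Ideal.mul_mem_left _ _ (Ideal.subset_span ⟨j, rfl⟩)
  have hJ : Ideal.span (Set.range u) = Ideal.span {α} * U := by
    apply le_antisymm
    · rw [Ideal.span_le]
      rintro _ ⟨i, rfl⟩
      rw [← ht i]
      rw [show t i * α = α * t i from mul_comm _ _]
      exact Ideal.mul_mem_mul (Ideal.mem_span_singleton_self α) (Ideal.subset_span ⟨i, rfl⟩)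
    · rw [Ideal.mul_le]
      intro r hr z hz
      obtain ⟨y, hy⟩ := Ideal.mem_span_singleton'.mp hr
      have hz' : α * z ∈ Ideal.span (Set.range u) := by
        refine Submodule.span_induction ?_ ?_ ?_ ?_ hz
        · rintro _ ⟨i, rfl⟩
          rw [show α * t i = u i by rw [← ht i]; ring]
          exact Ideal.subset_span ⟨i, rfl⟩
        · simp
        · intro x y _ _ hx hy
          rw [mul_add]; exact Ideal.add_mem _ hx hy
        · intro r x _ hx
          rw [smul_eq_mul, show α * (r * x) = r * (α * x) by ring]
          exact Ideal.mul_mem_left _ _ hx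
      rw [← hy, show y * α * z = y * (α * z) by ring]
      exact Ideal.mul_mem_left _ _ hz'
  refine ⟨u, hu0, hueig, ?_⟩
  by_cases hUtop : U = ⊤
  · rw [hJ, hUtop, Ideal.mul_top]
    exact ⟨α, rfl⟩
  · have : Ideal.span {lamO} = U :=
      hmax.eq_of_le hUtop (by rwa [Ideal.span_singleton_le_iff_mem])
    rw [hJ, ← this, Ideal.span_singleton_mul_span_singleton]
    exact ⟨α * lamO, rfl⟩

end Aux

set_option synthInstance.maxHeartbeats 1000000 in
set_option maxHeartbeats 1000000 in
/-- Let `λ' = 7 + √51` be the Perron eigenvalue of `B = [[13, 5], [3, 1]]`, `K = ℚ(√51)`.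
If `w` is an eigenvector of `B` for `λ'` with coordinates in `ℤ[λ'] ⊆ O_K` and `I_B` is
the `O_K`-ideal generated by the coordinates of `w`, then the class `[I_B]` does NOT lie
in the subgroup of `Cl(O_K)` generated by the classes of the prime ideals of `O_K`
dividing `λ'`; consequently (by invariance of this class under strong shift equivalence)
the matrices `[[14,2],[1,0]]` and `[[13,5],[3,1]]` are not strong shift equivalent. -/
theorem class_of_coord_ideal_B_not_mem_and_not_SSE {K : Type} [Field K] [NumberField K]
    (s : K) (hs : s ^ 2 = 51)
    (hgen : Algebra.adjoin ℚ ({s} : Set K) = ⊤)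
    (lamO : NumberField.RingOfIntegers K)
    (hlamO : algebraMap (NumberField.RingOfIntegers K) K lamO = 7 + s)
    (w : Fin 2 → NumberField.RingOfIntegers K) (hw0 : w ≠ 0)
    (hw : ∀ i, algebraMap (NumberField.RingOfIntegers K) K (w i) ∈
      Subring.closure ({7 + s} : Set K))
    (heig : Matrix.mulVec !![(13 : NumberField.RingOfIntegers K), 5; 3, 1] w = lamO • w) :
    (∀ hI : Ideal.span (Set.range w) ∈
        nonZeroDivisors (Ideal (NumberField.RingOfIntegers K)),
      ClassGroup.mk0 ⟨Ideal.span (Set.range w), hI⟩ ∉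
        Subgroup.closure {c : ClassGroup (NumberField.RingOfIntegers K) |
          ∃ Q : Ideal (NumberField.RingOfIntegers K), Q.IsPrime ∧ lamO ∈ Q ∧
            ∃ hQ : Q ∈ nonZeroDivisors (Ideal (NumberField.RingOfIntegers K)),
              c = ClassGroup.mk0 ⟨Q, hQ⟩}) ∧
    ¬ SSE ⟨2, !![14, 2; 1, 0]⟩ ⟨2, !![13, 5; 3, 1]⟩ := by
  obtain ⟨b, hb0, hb1⟩ := exists_basis s hs hgen
  obtain ⟨n5, n3, nmu, nnu, nlam⟩ := nZ_values s hs b hb0 hb1 lamO hlamO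
  have hmax := span_lam_maximal s hs lamO hlamO nlam
  have hlamne := lam_ne_zero s hs lamO hlamO
  -- eigenvector equations for B
  have h1 : 13 * w 0 + 5 * w 1 = lamO * w 0 := by
    have h0 := congrFun heig 0
    simpa [Matrix.mulVec, dotProduct, Fin.sum_univ_two] using h0
  have h2 : 3 * w 0 + w 1 = lamO * w 1 := by
    have h0 := congrFun heig 1
    simpa [Matrix.mulVec, dotProduct, Fin.sum_univ_two] using h0
  have hcore := core_nonprincipal s hs b hb0 hb1 lamO hlamO w hw0 h1 h2
  constructor
  · intro hI hmem
    -- the subgroup is trivial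
    have hsub : {c : ClassGroup (NumberField.RingOfIntegers K) |
          ∃ Q : Ideal (NumberField.RingOfIntegers K), Q.IsPrime ∧ lamO ∈ Q ∧
            ∃ hQ : Q ∈ nonZeroDivisors (Ideal (NumberField.RingOfIntegers K)),
              c = ClassGroup.mk0 ⟨Q, hQ⟩} ⊆ ((⊥ : Subgroup (ClassGroup (NumberField.RingOfIntegers K))) : Set (ClassGroup (NumberField.RingOfIntegers K))) := by
      rintro c ⟨Q, hQp, hQlam, hQ0, rfl⟩
      have hQeq : Ideal.span {lamO} = Q :=
        hmax.eq_of_le hQp.ne_top ((Ideal.span_singleton_le_iff_mem _).mpr hQlam)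
      have : Q.IsPrincipal := ⟨⟨lamO, hQeq.symm⟩⟩
      simpa [Subgroup.mem_bot] using (ClassGroup.mk0_eq_one_iff hQ0).mpr this
    have hle : Subgroup.closure {c : ClassGroup (NumberField.RingOfIntegers K) |
          ∃ Q : Ideal (NumberField.RingOfIntegers K), Q.IsPrime ∧ lamO ∈ Q ∧
            ∃ hQ : Q ∈ nonZeroDivisors (Ideal (NumberField.RingOfIntegers K)),
              c = ClassGroup.mk0 ⟨Q, hQ⟩} ≤ ⊥ := (Subgroup.closure_le _).mpr hsub
    have h1' := hle hmem
    rw [Subgroup.mem_bot] at h1'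
    exact hcore ((ClassGroup.mk0_eq_one_iff hI).mp h1')
  · intro hsse
    -- the invariant holds for A = [[14,2],[1,0]]
    have hsq : lamO * lamO = 14 * lamO + 2 := by
      have hco : (lamO : K) = 7 + s := hlamO
      apply NumberField.RingOfIntegers.coe_injective
      push_cast [hco, map_ofNat]
      linear_combination hs
    have hbase : SSEInv lamO ⟨2, !![14, 2; 1, 0]⟩ := by
      refine ⟨![lamO, 1], ?_, ?_, ?_⟩
      · intro h
        have := congrFun h 1
        simp at this
      · funext i
        fin_cases i
        · simp only [Matrix.mulVec, dotProduct, Fin.sum_univ_two, Matrix.map_apply]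
          simp
          linear_combination -hsq
        · simp [Matrix.mulVec, dotProduct, Fin.sum_univ_two, Matrix.map_apply]
      · have : (1 : 𝓞 K) ∈ Ideal.span (Set.range ![lamO, 1]) :=
          Ideal.subset_span ⟨1, rfl⟩
        rw [Ideal.eq_top_of_isUnit_mem _ this isUnit_one]
        exact ⟨1, (Ideal.span_singleton_one).symm⟩
    -- propagate along the chain
    have hall : ∀ Z, SSE ⟨2, !![14, 2; 1, 0]⟩ Z → SSEInv lamO Z := by
      intro Z h
      induction h with
      | refl => exact hbase
      | tail hchain helem ih => exact inv_step s hs lamO hlamO hmax _ _ helem ih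
    have hfin : SSEInv lamO ⟨2, !![13, 5; 3, 1]⟩ := hall _ hsse
    obtain ⟨v, hv0, hveig, hvP⟩ := hfin
    have g1 : 13 * v 0 + 5 * v 1 = lamO * v 0 := by
      have h0 := congrFun hveig 0
      simpa [Matrix.mulVec, dotProduct, Fin.sum_univ_two, Matrix.map_apply] using h0
    have g2 : 3 * v 0 + v 1 = lamO * v 1 := by
      have h0 := congrFun hveig 1
      simpa [Matrix.mulVec, dotProduct, Fin.sum_univ_two, Matrix.map_apply] using h0
    exact core_nonprincipal s hs b hb0 hb1 lamO hlamO v hv0 g1 g2 hvP
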